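/- Suppose $(X_n, Y_n, Z_n)$ are random vectors on a common probability space with $Y_n = g_n(Z_n)$ for measurable maps $g_n$, the conditional law of $X_n$ given $Z_n$ converges weakly to $N(0,\sigma^2)$ almost surely, and $Y_n$ converges in distribution to $N(0,\tau^2)$. Then $X_n + Y_n$ converges in distribution to $N(0, \sigma^2 + \tau^2)$. -/

import Mathlib

open MeasureTheory ProbabilityTheory Filter Real
open scoped NNReal ENNReal BoundedContinuousFunction Topology

section Helpers

lemma pdf_conv (s t : ℝ≥0) (hs : s ≠ 0) (ht : t ≠ 0) (z : ℝ) :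
    ∫ y, gaussianPDFReal 0 s (z - y) * gaussianPDFReal 0 t y
      = gaussianPDFReal 0 (s + t) z := by
  have hs' : (0:ℝ) < s := by exact_mod_cast zero_lt_iff.mpr hs
  have ht' : (0:ℝ) < t := by exact_mod_cast zero_lt_iff.mpr ht
  have hst : (0:ℝ) < (s:ℝ) + t := by linarith
  have hpi : (0:ℝ) < π := Real.pi_pos
  set a : ℝ := ((s:ℝ) + t) / (2 * s * t) with ha
  have ha' : 0 < a := by positivity
  set b : ℝ := t * z / ((s:ℝ) + t) with hb
  have key : ∀ y : ℝ, gaussianPDFReal 0 s (z - y) * gaussianPDFReal 0 t y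
      = ((Real.sqrt (2 * π * s))⁻¹ * (Real.sqrt (2 * π * t))⁻¹
          * Real.exp (- z^2 / (2 * ((s:ℝ) + t)))) * Real.exp (- a * (y - b)^2) := by
    intro y
    have hexp : rexp (-(z - y) ^ 2 / (2 * (s:ℝ))) * rexp (-y ^ 2 / (2 * (t:ℝ)))
        = rexp (- z^2 / (2*((s:ℝ)+t))) * rexp (-a * (y - b)^2) := by
      rw [← Real.exp_add, ← Real.exp_add]
      congr 1
      rw [ha, hb]
      field_simp
      ring
    simp only [gaussianPDFReal, sub_zero]
    rw [mul_mul_mul_comm, hexp]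
    ring
  rw [integral_congr_ae (Filter.Eventually.of_forall key), integral_const_mul]
  have hgauss : (∫ y : ℝ, Real.exp (- a * (y - b)^2)) = Real.sqrt (π / a) := by
    rw [show (fun y : ℝ => Real.exp (- a * (y - b)^2)) = ((fun y => Real.exp (- a * y^2)) ∘ (fun y => y - b)) from rfl,
      Function.comp_def, integral_sub_right_eq_self (fun y => Real.exp (- a * y^2)) b]
    exact integral_gaussian a
  rw [hgauss, gaussianPDFReal, sub_zero]
  have hsqrt : (Real.sqrt (2 * π * s))⁻¹ * (Real.sqrt (2 * π * t))⁻¹ * Real.sqrt (π / a)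
      = (Real.sqrt (2 * π * ((s:ℝ) + t)))⁻¹ := by
    rw [← Real.sqrt_inv (2 * π * (s:ℝ)), ← Real.sqrt_inv (2 * π * (t:ℝ)), ← Real.sqrt_inv,
      ← Real.sqrt_mul (by positivity), ← Real.sqrt_mul (by positivity)]
    congr 1
    rw [ha]
    field_simp
  push_cast
  rw [← hsqrt]
  ring

lemma integral_gaussianReal_eq (v : ℝ≥0) (hv : v ≠ 0) (h : ℝ → ℝ) :
    ∫ x, h x ∂(gaussianReal 0 v) = ∫ x, h x * gaussianPDFReal 0 v x := by
  rw [gaussianReal_of_var_ne_zero _ hv,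
    show gaussianPDF 0 v = (fun x => ((gaussianPDFReal 0 v x).toNNReal : ℝ≥0∞)) from rfl,
    integral_withDensity_eq_integral_smul ((measurable_gaussianPDFReal 0 v).real_toNNReal) h]
  congr 1
  ext x
  rw [NNReal.smul_def, smul_eq_mul, Real.coe_toNNReal _ (gaussianPDFReal_nonneg 0 v x), mul_comm]

lemma conv_eq (s t : ℝ≥0) (f : ℝ →ᵇ ℝ) :
    ∫ z, f z ∂(gaussianReal 0 (s + t))
      = ∫ y, (∫ x, f (x + y) ∂(gaussianReal 0 s)) ∂(gaussianReal 0 t) := by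
  by_cases ht : t = 0
  · subst ht
    rw [add_zero, gaussianReal_zero_var, integral_dirac]
    simp
  by_cases hs : s = 0
  · subst hs
    rw [zero_add]
    have : ∀ y : ℝ, (∫ x, f (x + y) ∂(gaussianReal 0 0)) = f y := by
      intro y
      rw [gaussianReal_zero_var, integral_dirac]
      simp
    rw [integral_congr_ae (Filter.Eventually.of_forall this)]
  -- main case
  have hst : s + t ≠ 0 := by simp [hs]
  have G2 : Integrable (fun p : ℝ × ℝ =>
      gaussianPDFReal 0 s (p.1 - p.2) * gaussianPDFReal 0 t p.2)
      ((volume : Measure ℝ).prod volume) := by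
    have G : Integrable (fun p : ℝ × ℝ => gaussianPDFReal 0 s p.1 * gaussianPDFReal 0 t p.2)
        ((volume : Measure ℝ).prod volume) :=
      (integrable_gaussianPDFReal 0 s).mul_prod (integrable_gaussianPDFReal 0 t)
    have := (measurePreserving_sub_prod (volume : Measure ℝ) volume).integrable_comp
      (g := fun p : ℝ × ℝ => gaussianPDFReal 0 s p.1 * gaussianPDFReal 0 t p.2)
      (((measurable_gaussianPDFReal 0 s).comp measurable_fst).mul
        ((measurable_gaussianPDFReal 0 t).comp measurable_snd)).aestronglyMeasurable
    exact this.mpr G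
  have H : Integrable (fun p : ℝ × ℝ =>
      f p.1 * (gaussianPDFReal 0 s (p.1 - p.2) * gaussianPDFReal 0 t p.2))
      ((volume : Measure ℝ).prod volume) :=
    G2.bdd_mul (f.continuous.measurable.comp measurable_fst).aestronglyMeasurable
      (Filter.Eventually.of_forall fun x => f.norm_coe_le_norm _)
  calc ∫ z, f z ∂(gaussianReal 0 (s + t))
      = ∫ z, f z * gaussianPDFReal 0 (s + t) z := integral_gaussianReal_eq _ hst _
    _ = ∫ z, ∫ y, f z * (gaussianPDFReal 0 s (z - y) * gaussianPDFReal 0 t y) := by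
        refine integral_congr_ae (Filter.Eventually.of_forall fun z => ?_)
        dsimp only
        rw [integral_const_mul, pdf_conv s t hs ht z]
    _ = ∫ y, ∫ z, f z * (gaussianPDFReal 0 s (z - y) * gaussianPDFReal 0 t y) := by
        exact integral_integral_swap H
    _ = ∫ y, (∫ x, f (x + y) ∂(gaussianReal 0 s)) * gaussianPDFReal 0 t y := by
        refine integral_congr_ae (Filter.Eventually.of_forall fun y => ?_)
        dsimp only
        rw [← integral_add_right_eq_self
          (fun z => f z * (gaussianPDFReal 0 s (z - y) * gaussianPDFReal 0 t y)) y]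
        simp only [add_sub_cancel_right]
        rw [integral_gaussianReal_eq s hs (fun x => f (x + y)), ← integral_mul_const]
        refine integral_congr_ae (Filter.Eventually.of_forall fun x => ?_)
        ring
    _ = ∫ y, (∫ x, f (x + y) ∂(gaussianReal 0 s)) ∂(gaussianReal 0 t) := by
        rw [integral_gaussianReal_eq t ht]

variable {Ω : Type*} [MeasurableSpace Ω] {μ : MeasureTheory.Measure Ω} [IsProbabilityMeasure μ]

lemma integrable_of_bdd {w : Ω → ℝ} (hw : AEStronglyMeasurable w μ) {C : ℝ}
    (hb : ∀ ω, |w ω| ≤ C) : Integrable w μ :=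
  (integrable_const C).mono' hw (Filter.Eventually.of_forall fun ω => by
    simpa [Real.norm_eq_abs] using hb ω)

/-- cutoff function: `1` on `|x| ≤ M - 1`, `0` on `|x| ≥ M`. -/
noncomputable def cutoff (M : ℝ) : ℝ →ᵇ ℝ :=
  ⟨⟨fun x => max 0 (min 1 (M - |x|)), by fun_prop⟩, 1, fun x y => by
    simp only [ContinuousMap.coe_mk]
    rw [Real.dist_eq]
    have h1x : (0:ℝ) ≤ max 0 (min 1 (M - |x|)) := le_max_left _ _
    have h2x : max 0 (min 1 (M - |x|)) ≤ 1 := max_le (by norm_num) (min_le_left _ _)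
    have h1y : (0:ℝ) ≤ max 0 (min 1 (M - |y|)) := le_max_left _ _
    have h2y : max 0 (min 1 (M - |y|)) ≤ 1 := max_le (by norm_num) (min_le_left _ _)
    rw [abs_le]
    constructor <;> linarith⟩

lemma cutoff_apply (M x : ℝ) : cutoff M x = max 0 (min 1 (M - |x|)) := rfl

lemma cutoff_nonneg (M x : ℝ) : 0 ≤ cutoff M x := le_max_left _ _

lemma cutoff_le_one (M x : ℝ) : cutoff M x ≤ 1 := by
  rw [cutoff_apply]; exact max_le (by norm_num) (min_le_left _ _)

lemma cutoff_eq_one {M x : ℝ} (h : |x| ≤ M - 1) : cutoff M x = 1 := by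
  rw [cutoff_apply, min_eq_left (by linarith), max_eq_right (by norm_num)]

lemma cutoff_eq_zero {M x : ℝ} (h : M ≤ |x|) : cutoff M x = 0 := by
  rw [cutoff_apply, min_eq_right (by linarith), max_eq_left (by linarith)]

lemma tail_small (ν : MeasureTheory.Measure ℝ) [IsProbabilityMeasure ν] {ε : ℝ} (hε : 0 < ε) :
    ∃ M : ℝ, 1 ≤ M ∧ (ν {x | M - 1 ≤ |x|}).toReal ≤ ε := by
  have hmeas : ∀ a : ℝ, MeasurableSet {x : ℝ | a ≤ |x|} := fun a =>
    (isClosed_le continuous_const continuous_abs).measurableSet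
  have hanti : Antitone (fun k : ℕ => {x : ℝ | (k : ℝ) ≤ |x|}) := by
    intro a b hab x hx
    simp only [Set.mem_setOf_eq] at hx ⊢
    exact le_trans (by exact_mod_cast Nat.cast_le.mpr hab) hx
  have hempty : (⋂ k : ℕ, {x : ℝ | (k : ℝ) ≤ |x|}) = ∅ := by
    ext x
    simp only [Set.mem_iInter, Set.mem_setOf_eq, Set.mem_empty_iff_false, iff_false, not_forall,
      not_le]
    obtain ⟨k, hk⟩ := exists_nat_gt |x|
    exact ⟨k, hk⟩
  have htendsto := tendsto_measure_iInter_atTop (μ := ν)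
    (fun k : ℕ => (hmeas (k : ℝ)).nullMeasurableSet) hanti ⟨0, measure_ne_top _ _⟩
  rw [hempty, measure_empty] at htendsto
  have : ∀ᶠ k : ℕ in atTop, ν {x : ℝ | (k : ℝ) ≤ |x|} < ENNReal.ofReal ε :=
    htendsto.eventually_lt_const (by simpa using hε)
  obtain ⟨k, hk⟩ := this.exists
  refine ⟨(k : ℝ) + 1, by linarith [Nat.cast_nonneg (α := ℝ) k], ?_⟩
  rw [add_sub_cancel_right]
  exact ENNReal.toReal_le_of_le_ofReal hε.le hk.le

lemma meas_le_integral {w : Ω → ℝ} (hw : Measurable w) (M : ℝ) :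
    (μ {ω | M ≤ |w ω|}).toReal ≤ ∫ ω, (1 - cutoff M (w ω)) ∂μ := by
  have hms : MeasurableSet {ω | M ≤ |w ω|} :=
    (isClosed_le continuous_const continuous_abs).measurableSet.preimage hw
  rw [← measureReal_def, ← MeasureTheory.integral_indicator_one hms]
  refine integral_mono ((integrable_const (1:ℝ)).indicator hms) ?_ ?_
  · exact (integrable_const (1:ℝ)).sub (integrable_of_bdd
      (((cutoff M).continuous.measurable.comp hw).aestronglyMeasurable)
      (C := 1) (fun ω => abs_le.mpr ⟨by linarith [cutoff_nonneg M (w ω)], cutoff_le_one M _⟩))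
  · intro ω
    rw [Set.indicator_apply]
    split_ifs with h'
    · rw [Set.mem_setOf_eq] at h'
      dsimp only
      rw [cutoff_eq_zero h', Pi.one_apply]
      norm_num
    · simp only [Pi.one_apply]
      linarith [cutoff_le_one M (w ω), cutoff_nonneg M (w ω)]

lemma integral_one_sub_cutoff_le (ν : MeasureTheory.Measure ℝ) [IsProbabilityMeasure ν] (M : ℝ) :
    ∫ x, (1 - cutoff M x) ∂ν ≤ (ν {x | M - 1 ≤ |x|}).toReal := by
  have hms : MeasurableSet {x : ℝ | M - 1 ≤ |x|} :=
    (isClosed_le continuous_const continuous_abs).measurableSet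
  rw [← measureReal_def, ← MeasureTheory.integral_indicator_one hms]
  refine integral_mono ?_ ((integrable_const (1:ℝ)).indicator hms) ?_
  · exact (integrable_const (1:ℝ)).sub (integrable_of_bdd
      ((cutoff M).continuous.measurable.aestronglyMeasurable)
      (C := 1) (fun x => abs_le.mpr ⟨by linarith [cutoff_nonneg M x], cutoff_le_one M x⟩))
  · intro x
    rw [Set.indicator_apply]
    split_ifs with h'
    · simp only [Pi.one_apply]
      linarith [cutoff_nonneg M x]
    · rw [Set.mem_setOf_eq] at h'
      dsimp only
      rw [cutoff_eq_one (by linarith)]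
      norm_num


lemma ind_of_mem {α : Type*} {S : Set α} {x : α} (h : x ∈ S) :
    Set.indicator S (1 : α → ℝ) x = 1 := by
  rw [Set.indicator_of_mem h]; rfl

lemma ind_of_not_mem {α : Type*} {S : Set α} {x : α} (h : x ∉ S) :
    Set.indicator S (1 : α → ℝ) x = 0 :=
  Set.indicator_of_notMem h _

section EpsAdd

variable {Ω : Type*} [MeasurableSpace Ω] (μ : MeasureTheory.Measure Ω) [IsProbabilityMeasure μ]

lemma integrable_eps_add (ε c : ℝ) {s1 s2 : Set Ω}
    (h1 : MeasurableSet s1) (h2 : MeasurableSet s2) :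
    Integrable (fun ω => ε + c*(Set.indicator s1 1 ω + Set.indicator s2 1 ω)) μ := by
  have i1 : Integrable (fun ω => Set.indicator s1 (1 : Ω → ℝ) ω) μ :=
    (integrable_const (1:ℝ)).indicator h1
  have i2 : Integrable (fun ω => Set.indicator s2 (1 : Ω → ℝ) ω) μ :=
    (integrable_const (1:ℝ)).indicator h2
  have i12 : Integrable (fun ω => Set.indicator s1 (1 : Ω → ℝ) ω
      + Set.indicator s2 (1 : Ω → ℝ) ω) μ := i1.add i2
  exact (integrable_const ε).add (i12.const_mul c)

lemma integral_eps_add (ε c : ℝ) {s1 s2 : Set Ω}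
    (h1 : MeasurableSet s1) (h2 : MeasurableSet s2) :
    ∫ ω, (ε + c*(Set.indicator s1 1 ω + Set.indicator s2 1 ω)) ∂μ
      = ε + c*((μ s1).toReal + (μ s2).toReal) := by
  have i1 : Integrable (fun ω => Set.indicator s1 (1 : Ω → ℝ) ω) μ :=
    (integrable_const (1:ℝ)).indicator h1
  have i2 : Integrable (fun ω => Set.indicator s2 (1 : Ω → ℝ) ω) μ :=
    (integrable_const (1:ℝ)).indicator h2
  have i12 : Integrable (fun ω => Set.indicator s1 (1 : Ω → ℝ) ω
      + Set.indicator s2 (1 : Ω → ℝ) ω) μ := i1.add i2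
  rw [integral_add (integrable_const ε) (i12.const_mul c), integral_const,
    integral_const_mul, integral_add i1 i2, MeasureTheory.integral_indicator_one h1,
    MeasureTheory.integral_indicator_one h2]
  simp [measure_univ, measureReal_def]

lemma integrable_eps_add_one (ε c : ℝ) {s2 : Set Ω} (h2 : MeasurableSet s2) :
    Integrable (fun ω => ε + c*(Set.indicator s2 1 ω)) μ := by
  have i2 : Integrable (fun ω => Set.indicator s2 (1 : Ω → ℝ) ω) μ :=
    (integrable_const (1:ℝ)).indicator h2
  exact (integrable_const ε).add (i2.const_mul c)

lemma integral_eps_add_one (ε c : ℝ) {s2 : Set Ω} (h2 : MeasurableSet s2) :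
    ∫ ω, (ε + c*(Set.indicator s2 1 ω)) ∂μ = ε + c*(μ s2).toReal := by
  have i2 : Integrable (fun ω => Set.indicator s2 (1 : Ω → ℝ) ω) μ :=
    (integrable_const (1:ℝ)).indicator h2
  rw [integral_add (integrable_const ε) (i2.const_mul c), integral_const,
    integral_const_mul, MeasureTheory.integral_indicator_one h2]
  simp [measure_univ, measureReal_def]

end EpsAdd

end Helpers

set_option maxHeartbeats 1600000 in
/-- If `Y n = g n (Z n)`, the conditional law of `X n` given `Z n` converges weakly to
`N(0, σ²)` almost surely, and `Y n` converges in distribution to `N(0, τ²)`, then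
`X n + Y n` converges in distribution to `N(0, σ² + τ²)`. -/
theorem sum_of_two_gaussians {Ω β : Type*} [MeasurableSpace Ω] [MeasurableSpace β]
    (μ : Measure Ω) [IsProbabilityMeasure μ]
    (X : ℕ → Ω → ℝ) (Z : ℕ → Ω → β) (g : ℕ → β → ℝ) (σ τ : NNReal)
    (hX : ∀ n, Measurable (X n)) (hZ : ∀ n, Measurable (Z n)) (hg : ∀ n, Measurable (g n))
    (hcond : ∀ᵐ ω ∂μ, ∀ f : BoundedContinuousFunction ℝ ℝ,
      Tendsto (fun n => (μ[(fun ω' => f (X n ω')) |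
          MeasurableSpace.comap (Z n) inferInstance]) ω)
        atTop (nhds (∫ x, f x ∂(gaussianReal 0 (σ ^ 2)))))
    (hY : ∀ f : BoundedContinuousFunction ℝ ℝ,
      Tendsto (fun n => ∫ ω, f (g n (Z n ω)) ∂μ) atTop
        (nhds (∫ x, f x ∂(gaussianReal 0 (τ ^ 2))))) :
    ∀ f : BoundedContinuousFunction ℝ ℝ,
      Tendsto (fun n => ∫ ω, f (X n ω + g n (Z n ω)) ∂μ) atTop
        (nhds (∫ x, f x ∂(gaussianReal 0 (σ ^ 2 + τ ^ 2)))) := by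
  intro f
  set Φs := gaussianReal 0 (σ ^ 2) with hΦs
  set Φt := gaussianReal 0 (τ ^ 2) with hΦt
  set C : ℝ := ‖f‖ with hCdef
  have hC : 0 ≤ C := norm_nonneg f
  have hfb : ∀ x, |f x| ≤ C := fun x => f.norm_coe_le_norm x
  have hYm : ∀ n, Measurable fun ω => g n (Z n ω) := fun n => (hg n).comp (hZ n)
  set mZ : ℕ → MeasurableSpace Ω := fun n => MeasurableSpace.comap (Z n) inferInstance with hmZ
  have hm : ∀ n, mZ n ≤ ‹MeasurableSpace Ω› := fun n => (hZ n).comap_le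
  -- integrability of bounded cts compositions
  have bc_int : ∀ (φ : ℝ →ᵇ ℝ) (w : Ω → ℝ), Measurable w → Integrable (fun ω => φ (w ω)) μ :=
    fun φ w hw => integrable_of_bdd ((φ.continuous.measurable.comp hw).aestronglyMeasurable)
      (fun ω => φ.norm_coe_le_norm _)
  -- weak convergence of X n
  have hXweak : ∀ (φ : ℝ →ᵇ ℝ),
      Tendsto (fun n => ∫ ω, φ (X n ω) ∂μ) atTop (𝓝 (∫ x, φ x ∂Φs)) := by
    intro φ
    have heq : (fun n => ∫ ω, φ (X n ω) ∂μ)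
        = fun n => ∫ ω, (μ[(fun ω' => φ (X n ω')) | mZ n]) ω ∂μ :=
      funext fun n => (integral_condExp (hm n)).symm
    rw [heq]
    have hlim : ∀ᵐ ω ∂μ, Tendsto (fun n => (μ[(fun ω' => φ (X n ω')) | mZ n]) ω) atTop
        (𝓝 ((fun _ : Ω => ∫ x, φ x ∂Φs) ω)) := by
      filter_upwards [hcond] with ω hω using hω φ
    have hbd : ∀ n, ∀ᵐ ω ∂μ, ‖(μ[(fun ω' => φ (X n ω')) | mZ n]) ω‖ ≤ (‖φ‖₊ : ℝ) := by
      intro n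
      have : ∀ᵐ ω ∂μ, |φ (X n ω)| ≤ (‖φ‖₊ : ℝ) :=
        Filter.Eventually.of_forall fun ω => φ.norm_coe_le_norm _
      filter_upwards [ae_bdd_condExp_of_ae_bdd (R := ‖φ‖₊) this] with ω h using by
        simpa [Real.norm_eq_abs] using h
    have := tendsto_integral_of_dominated_convergence (μ := μ)
      (F := fun n ω => (μ[(fun ω' => φ (X n ω')) | mZ n]) ω)
      (f := fun _ : Ω => ∫ x, φ x ∂Φs) (bound := fun _ => (‖φ‖₊ : ℝ))
      (fun n => (stronglyMeasurable_condExp.mono (hm n)).aestronglyMeasurable)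
      (integrable_const _) hbd hlim
    simpa [measure_univ] using this
  -- tail bound producer
  have tail_bound_X : ∀ {M ε : ℝ}, 0 < ε → (Φs {x | M - 1 ≤ |x|}).toReal ≤ ε →
      ∀ᶠ n in atTop, (μ {ω | M ≤ |X n ω|}).toReal ≤ 2 * ε := by
    intro M ε hε htail
    have h1 := hXweak (cutoff M)
    have hlow : ∀ᶠ n in atTop,
        (∫ x, cutoff M x ∂Φs) - ε < ∫ ω, cutoff M (X n ω) ∂μ :=
      h1.eventually (eventually_gt_nhds (by linarith))
    filter_upwards [hlow] with n hn
    have hint : Integrable (fun ω => cutoff M (X n ω)) μ := bc_int _ _ (hX n)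
    have hA := meas_le_integral (μ := μ) (hX n) M
    have hB : ∫ ω, (1 - cutoff M (X n ω)) ∂μ = 1 - ∫ ω, cutoff M (X n ω) ∂μ := by
      rw [integral_sub (integrable_const 1) hint]
      simp [measure_univ]
    have hC2 : ∫ x, (1 - cutoff M x) ∂Φs ≤ ε :=
      le_trans (integral_one_sub_cutoff_le Φs M) htail
    have hD2 : ∫ x, (1 - cutoff M x) ∂Φs = 1 - ∫ x, cutoff M x ∂Φs := by
      rw [integral_sub (integrable_const 1) ((cutoff M).integrable Φs)]
      simp [measure_univ]
    linarith
  have tail_bound_Y : ∀ {M ε : ℝ}, 0 < ε → (Φt {x | M - 1 ≤ |x|}).toReal ≤ ε →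
      ∀ᶠ n in atTop, (μ {ω | M ≤ |g n (Z n ω)|}).toReal ≤ 2 * ε := by
    intro M ε hε htail
    have h1 := hY (cutoff M)
    have hlow : ∀ᶠ n in atTop,
        (∫ x, cutoff M x ∂Φt) - ε < ∫ ω, cutoff M (g n (Z n ω)) ∂μ :=
      h1.eventually (eventually_gt_nhds (by linarith))
    filter_upwards [hlow] with n hn
    have hint : Integrable (fun ω => cutoff M (g n (Z n ω))) μ := bc_int _ _ (hYm n)
    have hA := meas_le_integral (μ := μ) (hYm n) M
    have hB : ∫ ω, (1 - cutoff M (g n (Z n ω))) ∂μ = 1 - ∫ ω, cutoff M (g n (Z n ω)) ∂μ := by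
      rw [integral_sub (integrable_const 1) hint]
      simp [measure_univ]
    have hC2 : ∫ x, (1 - cutoff M x) ∂Φt ≤ ε :=
      le_trans (integral_one_sub_cutoff_le Φt M) htail
    have hD2 : ∫ x, (1 - cutoff M x) ∂Φt = 1 - ∫ x, cutoff M x ∂Φt := by
      rw [integral_sub (integrable_const 1) ((cutoff M).integrable Φt)]
      simp [measure_univ]
    linarith
  -- the function F
  set F : ℝ → ℝ := fun y => ∫ x, f (x + y) ∂Φs with hFdef
  have hFcont : Continuous F := by
    refine continuous_of_dominated (bound := fun _ => C) ?_ ?_ (integrable_const C) ?_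
    · exact fun y => ((f.continuous.measurable.comp (measurable_id.add_const y)).aestronglyMeasurable)
    · exact fun y => Filter.Eventually.of_forall fun x => f.norm_coe_le_norm _
    · exact Filter.Eventually.of_forall fun x => f.continuous.comp (continuous_const.add continuous_id)
  have hFbdd : ∀ y, |F y| ≤ C := by
    intro y
    rw [← Real.norm_eq_abs]
    show ‖∫ x, f (x + y) ∂Φs‖ ≤ C
    calc ‖∫ x, f (x + y) ∂Φs‖ ≤ ‖f‖ * (Φs Set.univ).toReal :=
          norm_integral_le_of_norm_le_const (μ := Φs)
            (Filter.Eventually.of_forall fun x => f.norm_coe_le_norm _)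
      _ = C := by simp [measure_univ, hCdef]
  set Fb : ℝ →ᵇ ℝ := ⟨⟨F, hFcont⟩, 2 * C, fun x y => by
    simp only [ContinuousMap.coe_mk]
    rw [Real.dist_eq]
    have := hFbdd x; have := hFbdd y
    rw [abs_le] at *
    constructor <;> linarith⟩ with hFbdef
  -- B n tends to the limit
  have hB : Tendsto (fun n => ∫ ω, F (g n (Z n ω)) ∂μ) atTop
      (𝓝 (∫ x, f x ∂(gaussianReal 0 (σ ^ 2 + τ ^ 2)))) := by
    have := hY Fb
    rw [conv_eq (σ ^ 2) (τ ^ 2) f]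
    exact this
  -- reduce to difference tending to zero
  suffices htend : Tendsto (fun n => (∫ ω, f (X n ω + g n (Z n ω)) ∂μ)
      - ∫ ω, F (g n (Z n ω)) ∂μ) atTop (𝓝 0) by
    have h2 := htend.add hB
    rw [zero_add] at h2
    have : (fun n => ((∫ ω, f (X n ω + g n (Z n ω)) ∂μ) - ∫ ω, F (g n (Z n ω)) ∂μ)
        + ∫ ω, F (g n (Z n ω)) ∂μ) = fun n => ∫ ω, f (X n ω + g n (Z n ω)) ∂μ :=
      funext fun n => sub_add_cancel _ _
    rwa [this] at h2
  rw [NormedAddCommGroup.tendsto_nhds_zero]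
  intro ε0 hε0
  set ε : ℝ := ε0 / (20 * (C + 1)) with hεdef
  have hε : 0 < ε := by positivity
  -- choose M
  obtain ⟨M1, hM1one, hM1⟩ := tail_small Φs hε
  obtain ⟨M2, hM2one, hM2⟩ := tail_small Φt hε
  set M : ℝ := max M1 M2 with hMdef
  have hMone : 1 ≤ M := le_trans hM1one (le_max_left _ _)
  have hMs : (Φs {x | M - 1 ≤ |x|}).toReal ≤ ε := by
    refine le_trans ?_ hM1
    refine ENNReal.toReal_mono (measure_ne_top _ _) (measure_mono fun x hx => ?_)
    simp only [Set.mem_setOf_eq] at hx ⊢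
    have : M1 ≤ M := le_max_left _ _
    linarith
  have hMt : (Φt {x | M - 1 ≤ |x|}).toReal ≤ ε := by
    refine le_trans ?_ hM2
    refine ENNReal.toReal_mono (measure_ne_top _ _) (measure_mono fun x hx => ?_)
    simp only [Set.mem_setOf_eq] at hx ⊢
    have : M2 ≤ M := le_max_right _ _
    linarith
  set K : ℝ := 2 * M + 2 with hKdef
  -- uniform continuity on [-K, K]
  obtain ⟨δ0, hδ0, hδf⟩ : ∃ δ0 > 0, ∀ a ∈ Set.Icc (-K) K, ∀ b ∈ Set.Icc (-K) K,
      dist a b < δ0 → dist (f a) (f b) < ε := by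
    have h := (isCompact_Icc (a := -K) (b := K)).uniformContinuousOn_of_continuous
      f.continuous.continuousOn
    rw [Metric.uniformContinuousOn_iff] at h
    obtain ⟨δ0, hδ0, hh⟩ := h ε hε
    exact ⟨δ0, hδ0, fun a ha b hb hab => hh a ha b hb hab⟩
  set δ : ℝ := min δ0 1 / 2 with hδdef
  have hδpos : 0 < δ := by positivity
  have hδ1 : δ ≤ 1 := by
    have : min δ0 1 ≤ 1 := min_le_right _ _
    simp only [hδdef]
    linarith
  have hδlt : δ < δ0 := by
    have : min δ0 1 ≤ δ0 := min_le_left _ _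
    have h2 : 0 < min δ0 1 := lt_min hδ0 one_pos
    simp only [hδdef]
    linarith
  have huc : ∀ a ∈ Set.Icc (-K) K, ∀ b ∈ Set.Icc (-K) K, |a - b| ≤ δ → |f a - f b| ≤ ε := by
    intro a ha b hb hab
    have := hδf a ha b hb (by rw [Real.dist_eq]; linarith)
    rw [Real.dist_eq] at this
    linarith
  -- grid
  set N : ℕ := ⌈(M + 1) / δ⌉₊ with hNdef
  set T : Finset ℤ := Finset.Icc (-(N:ℤ)) N with hTdef
  have hNδ : M + 1 ≤ (N:ℝ) * δ := by
    have hNge : (M + 1) / δ ≤ (N:ℝ) := Nat.le_ceil _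
    rw [div_le_iff₀ hδpos] at hNge
    linarith
  have hkT : ∀ y : ℝ, |y| < M → ⌊y / δ⌋ ∈ T := by
    intro y hy
    rw [hTdef, Finset.mem_Icc]
    rw [abs_lt] at hy
    constructor
    · rw [Int.le_floor]
      push_cast
      rw [le_div_iff₀ hδpos]
      linarith
    · have h1 : (⌊y / δ⌋ : ℝ) ≤ y / δ := Int.floor_le _
      have h2 : y / δ ≤ (N:ℝ) := by rw [div_le_iff₀ hδpos]; linarith
      exact_mod_cast le_trans h1 h2
  have hfloor : ∀ y : ℝ, |y - δ * ⌊y / δ⌋| ≤ δ := by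
    intro y
    have h1 : (⌊y / δ⌋ : ℝ) ≤ y / δ := Int.floor_le _
    have h2 : y / δ < ⌊y / δ⌋ + 1 := Int.lt_floor_add_one _
    have h3 : δ * (y / δ) = y := by field_simp
    have h4 := mul_le_mul_of_nonneg_left h1 hδpos.le
    have h5 := (mul_lt_mul_iff_right₀ hδpos).mpr h2
    rw [abs_le]
    rw [mul_add, mul_one] at h5
    constructor <;> linarith
  -- translated test functions
  set fk : ℤ → (ℝ →ᵇ ℝ) := fun k =>
    f.compContinuous ⟨fun x => x + δ * k, continuous_id.add continuous_const⟩ with hfkdef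
  have hfk_apply : ∀ (k : ℤ) (x : ℝ), fk k x = f (x + δ * k) := fun k x => rfl
  set c : ℤ → ℝ := fun k => ∫ x, fk k x ∂Φs with hcdef
  have hck : ∀ k : ℤ, c k = F (δ * k) := fun k => rfl
  have hcbdd : ∀ k : ℤ, |c k| ≤ C := fun k => by rw [hck]; exact hFbdd _
  -- the grid index random variables
  set κ : ℕ → Ω → ℤ := fun n ω => ⌊g n (Z n ω) / δ⌋ with hκdef
  have hAmZ : ∀ n k, MeasurableSet[mZ n] {ω | κ n ω = k} := by
    intro n k
    exact ⟨(fun b => ⌊g n b / δ⌋) ⁻¹' {k},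
      ((hg n).div_const δ).floor (measurableSet_singleton k), rfl⟩
  have hAmeas : ∀ n k, MeasurableSet {ω | κ n ω = k} := fun n k => hm n _ (hAmZ n k)
  -- the three approximants
  set w1 : ℕ → Ω → ℝ := fun n ω =>
    ∑ k ∈ T, Set.indicator {ω' | κ n ω' = k} (fun ω' => fk k (X n ω')) ω with hw1def
  set w2 : ℕ → Ω → ℝ := fun n ω =>
    ∑ k ∈ T, Set.indicator {ω' | κ n ω' = k} (μ[(fun ω' => fk k (X n ω')) | mZ n]) ω with hw2def
  set w3 : ℕ → Ω → ℝ := fun n ω =>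
    ∑ k ∈ T, Set.indicator {ω' | κ n ω' = k} (fun _ => c k) ω with hw3def
  have hclosed : ∀ (h : ℤ → Ω → ℝ) (n : ℕ) (ω : Ω),
      (∑ k ∈ T, Set.indicator {ω' | κ n ω' = k} (h k) ω)
        = if κ n ω ∈ T then h (κ n ω) ω else 0 := by
    intro h n ω
    rw [← Finset.sum_ite_eq T (κ n ω) (fun k => h k ω)]
    refine Finset.sum_congr rfl fun k _ => ?_
    rw [Set.indicator_apply]
    congr 1
  -- integrability
  have hu_int : ∀ n, Integrable (fun ω => f (X n ω + g n (Z n ω))) μ :=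
    fun n => bc_int f _ ((hX n).add (hYm n))
  have hw1int : ∀ n, Integrable (w1 n) μ := by
    intro n
    rw [hw1def]
    exact integrable_finset_sum T fun k _ => (bc_int (fk k) _ (hX n)).indicator (hAmeas n k)
  have hw2int : ∀ n, Integrable (w2 n) μ := by
    intro n
    rw [hw2def]
    exact integrable_finset_sum T fun k _ => integrable_condExp.indicator (hAmeas n k)
  have hw3int : ∀ n, Integrable (w3 n) μ := by
    intro n
    rw [hw3def]
    exact integrable_finset_sum T fun k _ => (integrable_const (c k)).indicator (hAmeas n k)
  have hFYint : ∀ n, Integrable (fun ω => F (g n (Z n ω))) μ := fun n => bc_int Fb _ (hYm n)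
  -- bad sets
  have hbadXmeas : ∀ n, MeasurableSet {ω | M ≤ |X n ω|} := fun n =>
    (isClosed_le continuous_const continuous_abs).measurableSet.preimage (hX n)
  have hbadYmeas : ∀ n, MeasurableSet {ω | M ≤ |g n (Z n ω)|} := fun n =>
    (isClosed_le continuous_const continuous_abs).measurableSet.preimage (hYm n)
  -- bounds on w's
  have hw1bdd : ∀ n ω, |w1 n ω| ≤ C := by
    intro n ω
    rw [hw1def]
    dsimp only
    rw [hclosed]
    split_ifs
    · exact hfb _
    · rwa [abs_zero]
  have hw3bdd : ∀ n ω, |w3 n ω| ≤ C := by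
    intro n ω
    rw [hw3def]
    dsimp only
    rw [hclosed]
    split_ifs
    · exact hcbdd _
    · rwa [abs_zero]
  -- step 1 : |∫ u - ∫ w1| small
  have hI1 : ∀ n, |(∫ ω, f (X n ω + g n (Z n ω)) ∂μ) - ∫ ω, w1 n ω ∂μ|
      ≤ ε + 2*C*((μ {ω | M ≤ |X n ω|}).toReal + (μ {ω | M ≤ |g n (Z n ω)|}).toReal) := by
    intro n
    rw [← integral_sub (hu_int n) (hw1int n)]
    have hptw : ∀ ω, |f (X n ω + g n (Z n ω)) - w1 n ω|
        ≤ ε + 2*C*(Set.indicator {ω' | M ≤ |X n ω'|} 1 ω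
            + Set.indicator {ω' | M ≤ |g n (Z n ω')|} 1 ω) := by
      intro ω
      have hw1c : w1 n ω = if κ n ω ∈ T then f (X n ω + δ * κ n ω) else 0 := by
        rw [hw1def]
        dsimp only
        rw [hclosed]
        simp only [hfk_apply]
      have hiX : (0:ℝ) ≤ Set.indicator {ω' | M ≤ |X n ω'|} 1 ω :=
        Set.indicator_nonneg (fun _ _ => zero_le_one) ω
      have hiY : (0:ℝ) ≤ Set.indicator {ω' | M ≤ |g n (Z n ω')|} 1 ω :=
        Set.indicator_nonneg (fun _ _ => zero_le_one) ω
      by_cases hx : M ≤ |X n ω|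
      · have h1 : Set.indicator {ω' | M ≤ |X n ω'|} (1 : Ω → ℝ) ω = 1 :=
          ind_of_mem (show ω ∈ {ω' | M ≤ |X n ω'|} from hx)
        have h2 : |f (X n ω + g n (Z n ω)) - w1 n ω| ≤ 2*C := by
          have hu' := abs_le.mp (hfb (X n ω + g n (Z n ω)))
          have hw' := abs_le.mp (hw1bdd n ω)
          rw [abs_le]
          constructor <;> linarith
        rw [h1]
        have hprod : 2*C*1 ≤ 2*C*(1 + Set.indicator {ω' | M ≤ |g n (Z n ω')|} 1 ω) :=
          mul_le_mul_of_nonneg_left (by linarith) (by linarith)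
        linarith
      by_cases hy : M ≤ |g n (Z n ω)|
      · have h1 : Set.indicator {ω' | M ≤ |g n (Z n ω')|} (1 : Ω → ℝ) ω = 1 :=
          ind_of_mem (show ω ∈ {ω' | M ≤ |g n (Z n ω')|} from hy)
        have h2 : |f (X n ω + g n (Z n ω)) - w1 n ω| ≤ 2*C := by
          have hu' := abs_le.mp (hfb (X n ω + g n (Z n ω)))
          have hw' := abs_le.mp (hw1bdd n ω)
          rw [abs_le]
          constructor <;> linarith
        rw [h1]
        have hprod : 2*C*1 ≤ 2*C*(Set.indicator {ω' | M ≤ |X n ω'|} 1 ω + 1) :=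
          mul_le_mul_of_nonneg_left (by linarith) (by linarith)
        linarith
      -- good case
      push_neg at hx hy
      have hkmem : κ n ω ∈ T := hkT _ hy
      rw [hw1c, if_pos hkmem]
      have habsX := abs_lt.mp hx
      have habsY := abs_lt.mp hy
      have hflr : |g n (Z n ω) - δ * κ n ω| ≤ δ := hfloor (g n (Z n ω))
      have hflr' := abs_le.mp hflr
      have hgood : |f (X n ω + g n (Z n ω)) - f (X n ω + δ * κ n ω)| ≤ ε := by
        refine huc _ ⟨by simp only [hKdef]; linarith, by simp only [hKdef]; linarith⟩
          _ ⟨by simp only [hKdef]; linarith, by simp only [hKdef]; linarith⟩ ?_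
        have heq : X n ω + g n (Z n ω) - (X n ω + δ * κ n ω) = g n (Z n ω) - δ * κ n ω := by
          ring
        rw [heq]
        exact hflr
      have hnn : (0:ℝ) ≤ 2*C*(Set.indicator {ω' | M ≤ |X n ω'|} 1 ω
          + Set.indicator {ω' | M ≤ |g n (Z n ω')|} 1 ω) :=
        mul_nonneg (by linarith) (by linarith)
      linarith
    calc |∫ ω, (f (X n ω + g n (Z n ω)) - w1 n ω) ∂μ|
        ≤ ∫ ω, |f (X n ω + g n (Z n ω)) - w1 n ω| ∂μ := by
          simpa [Real.norm_eq_abs] using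
            norm_integral_le_integral_norm (μ := μ) (fun ω => f (X n ω + g n (Z n ω)) - w1 n ω)
      _ ≤ ∫ ω, (ε + 2*C*(Set.indicator {ω' | M ≤ |X n ω'|} 1 ω
            + Set.indicator {ω' | M ≤ |g n (Z n ω')|} 1 ω)) ∂μ := by
          exact integral_mono ((hu_int n).sub (hw1int n)).abs
            (integrable_eps_add μ ε (2*C) (hbadXmeas n) (hbadYmeas n)) hptw
      _ = ε + 2*C*((μ {ω | M ≤ |X n ω|}).toReal + (μ {ω | M ≤ |g n (Z n ω)|}).toReal) :=
          integral_eps_add μ ε (2*C) (hbadXmeas n) (hbadYmeas n)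
  -- step 2 : ∫ w1 = ∫ w2
  have hE2 : ∀ n, ∫ ω, w1 n ω ∂μ = ∫ ω, w2 n ω ∂μ := by
    intro n
    rw [hw1def, hw2def]
    dsimp only
    rw [integral_finset_sum T fun k _ => (bc_int (fk k) _ (hX n)).indicator (hAmeas n k),
      integral_finset_sum T fun k _ => integrable_condExp.indicator (hAmeas n k)]
    refine Finset.sum_congr rfl fun k _ => ?_
    rw [integral_indicator (hAmeas n k), integral_indicator (hAmeas n k)]
    exact (setIntegral_condExp (hm n) (bc_int (fk k) _ (hX n)) (hAmZ n k)).symm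
  -- step 3 : |∫ w2 - ∫ w3| ≤ sum of condexp errors
  have hI3 : ∀ n, |(∫ ω, w2 n ω ∂μ) - ∫ ω, w3 n ω ∂μ|
      ≤ ∑ k ∈ T, ∫ ω, |(μ[(fun ω' => fk k (X n ω')) | mZ n]) ω - c k| ∂μ := by
    intro n
    rw [← integral_sub (hw2int n) (hw3int n)]
    have hptw : ∀ ω, |w2 n ω - w3 n ω|
        ≤ ∑ k ∈ T, |(μ[(fun ω' => fk k (X n ω')) | mZ n]) ω - c k| := by
      intro ω
      rw [hw2def, hw3def]
      dsimp only
      rw [← Finset.sum_sub_distrib]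
      refine (Finset.abs_sum_le_sum_abs _ _).trans (Finset.sum_le_sum fun k _ => ?_)
      by_cases hmem : ω ∈ {ω' | κ n ω' = k}
      · rw [Set.indicator_of_mem hmem, Set.indicator_of_mem hmem]
      · rw [Set.indicator_of_notMem hmem, Set.indicator_of_notMem hmem]
        simpa using abs_nonneg _
    calc |∫ ω, (w2 n ω - w3 n ω) ∂μ|
        ≤ ∫ ω, |w2 n ω - w3 n ω| ∂μ := by
          simpa [Real.norm_eq_abs] using
            norm_integral_le_integral_norm (μ := μ) (fun ω => w2 n ω - w3 n ω)
      _ ≤ ∫ ω, (∑ k ∈ T, |(μ[(fun ω' => fk k (X n ω')) | mZ n]) ω - c k|) ∂μ := by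
          refine integral_mono ((hw2int n).sub (hw3int n)).abs ?_ hptw
          exact integrable_finset_sum T fun k _ =>
            (integrable_condExp.sub (integrable_const (c k))).abs
      _ = ∑ k ∈ T, ∫ ω, |(μ[(fun ω' => fk k (X n ω')) | mZ n]) ω - c k| ∂μ :=
          integral_finset_sum T fun k _ =>
            (integrable_condExp.sub (integrable_const (c k))).abs
  -- step 3' : the sum tends to 0
  have hT3 : Tendsto (fun n => ∑ k ∈ T,
      ∫ ω, |(μ[(fun ω' => fk k (X n ω')) | mZ n]) ω - c k| ∂μ) atTop (𝓝 0) := by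
    have hterm : ∀ k : ℤ, Tendsto (fun n =>
        ∫ ω, |(μ[(fun ω' => fk k (X n ω')) | mZ n]) ω - c k| ∂μ) atTop (𝓝 0) := by
      intro k
      have := tendsto_integral_of_dominated_convergence (μ := μ)
        (F := fun n ω => |(μ[(fun ω' => fk k (X n ω')) | mZ n]) ω - c k|)
        (f := fun _ : Ω => (0:ℝ)) (bound := fun _ => C + C)
        (fun n => (((stronglyMeasurable_condExp.mono (hm n)).measurable.sub
          measurable_const).abs).aestronglyMeasurable)
        (integrable_const _) ?_ ?_
      · simpa using this
      · intro n
        have hae : ∀ᵐ ω ∂μ, |(μ[(fun ω' => fk k (X n ω')) | mZ n]) ω| ≤ (‖f‖₊ : ℝ) := by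
          refine ae_bdd_condExp_of_ae_bdd (Filter.Eventually.of_forall fun ω => ?_)
          rw [hfk_apply]
          exact hfb _
        filter_upwards [hae] with ω hω
        rw [Real.norm_eq_abs, abs_abs]
        have h2 := abs_le.mp (hcbdd k)
        have h1 := abs_le.mp (by rwa [coe_nnnorm] at hω :
          |(μ[(fun ω' => fk k (X n ω')) | mZ n]) ω| ≤ C)
        rw [abs_le]
        constructor <;> linarith
      · filter_upwards [hcond] with ω hω
        have h0 := (hω (fk k)).sub (tendsto_const_nhds (x := c k))
        have h1 : (∫ x, (fk k) x ∂Φs) - c k = 0 := by rw [hcdef]; ring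
        rw [h1] at h0
        simpa using h0.abs
    have := tendsto_finset_sum T (fun k _ => hterm k)
    simpa using this
  -- step 4 : |∫ w3 - ∫ F(Y)| small
  have hFdiff : ∀ a b : ℝ, |a| ≤ M + 1 → |b| ≤ M → |a - b| ≤ δ →
      |F a - F b| ≤ ε + 2*C*ε := by
    intro a b ha hb hab
    have hinta : Integrable (fun x => f (x + a)) Φs :=
      integrable_of_bdd ((f.continuous.measurable.comp
        (measurable_id.add_const a)).aestronglyMeasurable) (fun x => hfb _)
    have hintb : Integrable (fun x => f (x + b)) Φs :=
      integrable_of_bdd ((f.continuous.measurable.comp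
        (measurable_id.add_const b)).aestronglyMeasurable) (fun x => hfb _)
    have hFa : F a = ∫ x, f (x + a) ∂Φs := rfl
    have hFb' : F b = ∫ x, f (x + b) ∂Φs := rfl
    rw [hFa, hFb', ← integral_sub hinta hintb]
    have htail_meas : MeasurableSet {x : ℝ | M - 1 ≤ |x|} :=
      (isClosed_le continuous_const continuous_abs).measurableSet
    have hptw : ∀ x : ℝ, |f (x + a) - f (x + b)|
        ≤ ε + 2*C*(Set.indicator {x' : ℝ | M - 1 ≤ |x'|} 1 x) := by
      intro x
      by_cases hx : M - 1 ≤ |x|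
      · rw [ind_of_mem (show x ∈ {x' : ℝ | M - 1 ≤ |x'|} from hx)]
        have h1 := abs_le.mp (hfb (x + a))
        have h2 := abs_le.mp (hfb (x + b))
        rw [abs_le]
        constructor <;> linarith
      · rw [ind_of_not_mem (show x ∉ {x' : ℝ | M - 1 ≤ |x'|} from hx)]
        push_neg at hx
        have hxx := abs_lt.mp hx
        have haa := abs_le.mp ha
        have hbb := abs_le.mp hb
        have hgood : |f (x + a) - f (x + b)| ≤ ε := by
          refine huc _ ⟨by simp only [hKdef]; linarith, by simp only [hKdef]; linarith⟩
            _ ⟨by simp only [hKdef]; linarith, by simp only [hKdef]; linarith⟩ ?_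
          have : x + a - (x + b) = a - b := by ring
          rw [this]
          exact hab
        linarith
    calc |∫ x, (f (x + a) - f (x + b)) ∂Φs|
        ≤ ∫ x, |f (x + a) - f (x + b)| ∂Φs := by
          simpa [Real.norm_eq_abs] using
            norm_integral_le_integral_norm (μ := Φs) (fun x => f (x + a) - f (x + b))
      _ ≤ ∫ x, (ε + 2*C*(Set.indicator {x' : ℝ | M - 1 ≤ |x'|} 1 x)) ∂Φs := by
          exact integral_mono (hinta.sub hintb).abs
            (integrable_eps_add_one Φs ε (2*C) htail_meas) hptw
      _ = ε + 2*C*(Φs {x : ℝ | M - 1 ≤ |x|}).toReal :=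
          integral_eps_add_one Φs ε (2*C) htail_meas
      _ ≤ ε + 2*C*ε := by
          have : 2*C*(Φs {x : ℝ | M - 1 ≤ |x|}).toReal ≤ 2*C*ε :=
            mul_le_mul_of_nonneg_left hMs (by positivity)
          linarith
  have hI4 : ∀ n, |(∫ ω, w3 n ω ∂μ) - ∫ ω, F (g n (Z n ω)) ∂μ|
      ≤ (ε + 2*C*ε) + 2*C*(μ {ω | M ≤ |g n (Z n ω)|}).toReal := by
    intro n
    rw [← integral_sub (hw3int n) (hFYint n)]
    have hptw : ∀ ω, |w3 n ω - F (g n (Z n ω))|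
        ≤ (ε + 2*C*ε) + 2*C*(Set.indicator {ω' | M ≤ |g n (Z n ω')|} 1 ω) := by
      intro ω
      have hw3c : w3 n ω = if κ n ω ∈ T then c (κ n ω) else 0 := by
        rw [hw3def]
        dsimp only
        rw [hclosed]
      have hiY : (0:ℝ) ≤ Set.indicator {ω' | M ≤ |g n (Z n ω')|} 1 ω :=
        Set.indicator_nonneg (fun _ _ => zero_le_one) ω
      by_cases hy : M ≤ |g n (Z n ω)|
      · have h1 : Set.indicator {ω' | M ≤ |g n (Z n ω')|} (1 : Ω → ℝ) ω = 1 :=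
          ind_of_mem (show ω ∈ {ω' | M ≤ |g n (Z n ω')|} from hy)
        have h2 := abs_le.mp (hw3bdd n ω)
        have h3 := abs_le.mp (hFbdd (g n (Z n ω)))
        rw [h1, abs_le]
        have hCε : 0 ≤ 2*C*ε := by positivity
        constructor <;> linarith
      · push_neg at hy
        have hkmem : κ n ω ∈ T := hkT _ hy
        rw [hw3c, if_pos hkmem, hck]
        have hflrk : |g n (Z n ω) - δ * κ n ω| ≤ δ := hfloor (g n (Z n ω))
        have hflr := abs_le.mp hflrk
        have habsY := abs_lt.mp hy
        have hd : |F (δ * κ n ω) - F (g n (Z n ω))| ≤ ε + 2*C*ε := by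
          refine hFdiff _ _ ?_ hy.le ?_
          · rw [abs_le]
            constructor <;> linarith
          · have heq : δ * (κ n ω : ℝ) - g n (Z n ω) = -(g n (Z n ω) - δ * κ n ω) := by
              ring
            rw [heq, abs_neg]
            exact hflrk
        have hnn2 : 0 ≤ 2*C*(Set.indicator {ω' | M ≤ |g n (Z n ω')|} 1 ω) :=
          mul_nonneg (by linarith) hiY
        linarith
    calc |∫ ω, (w3 n ω - F (g n (Z n ω))) ∂μ|
        ≤ ∫ ω, |w3 n ω - F (g n (Z n ω))| ∂μ := by
          simpa [Real.norm_eq_abs] using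
            norm_integral_le_integral_norm (μ := μ) (fun ω => w3 n ω - F (g n (Z n ω)))
      _ ≤ ∫ ω, ((ε + 2*C*ε) + 2*C*(Set.indicator {ω' | M ≤ |g n (Z n ω')|} 1 ω)) ∂μ := by
          exact integral_mono ((hw3int n).sub (hFYint n)).abs
            (integrable_eps_add_one μ (ε + 2*C*ε) (2*C) (hbadYmeas n)) hptw
      _ = (ε + 2*C*ε) + 2*C*(μ {ω | M ≤ |g n (Z n ω)|}).toReal :=
          integral_eps_add_one μ (ε + 2*C*ε) (2*C) (hbadYmeas n)
  -- put everything together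
  filter_upwards [tail_bound_X hε hMs, tail_bound_Y hε hMt,
    hT3.eventually (eventually_le_nhds hε)] with n htX htY htD
  have h1 := hI1 n
  have h2 := hE2 n
  have h3 := (hI3 n).trans htD
  have h4 := hI4 n
  have hq1 : 2*C*((μ {ω | M ≤ |X n ω|}).toReal + (μ {ω | M ≤ |g n (Z n ω)|}).toReal)
      ≤ 2*C*(2*ε + 2*ε) :=
    mul_le_mul_of_nonneg_left (add_le_add htX htY) (by positivity)
  have hq2 : 2*C*(μ {ω | M ≤ |g n (Z n ω)|}).toReal ≤ 2*C*(2*ε) :=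
    mul_le_mul_of_nonneg_left htY (by positivity)
  have hfin : 3*ε + 14*C*ε < ε0 := by
    have h20 : 20*(C+1)*ε = ε0 := by
      rw [hεdef]
      field_simp
    linarith [mul_nonneg hC hε.le]
  rw [Real.norm_eq_abs]
  have habs : |(∫ ω, f (X n ω + g n (Z n ω)) ∂μ) - ∫ ω, F (g n (Z n ω)) ∂μ|
      ≤ 3*ε + 14*C*ε := by
    rw [abs_le] at h1 h3 h4 ⊢
    constructor <;> linarith
  linarith [habs, hfin]
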